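/- Let G be a non-abelian finite p-group and M a central subgroup of G. If Aut^M_{Z(G)}(G) = Inn(G), then G has nilpotency class 2, γ₂(G) ≤ M, and M is cyclic. -/

import Mathlib

open Subgroup

private lemma auxCyclic {p : ℕ} [Fact p.Prime] {H : Type*} [CommGroup H] [Finite H]
    (hH : IsPGroup p H) (h1 : Nat.card {x : H // x ^ p = 1} ≤ p) : IsCyclic H := by
  classical
  have hp := (Fact.out : p.Prime)
  have := Fintype.ofFinite H
  have hA : ∀ k : ℕ, Nat.card {x : H // x ^ (p ^ k) = 1} ≤ p ^ k := by
    intro k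
    induction k with
    | zero =>
      have hs : Subsingleton {x : H // x ^ (p ^ 0) = 1} := by
        refine ⟨?_⟩
        rintro ⟨a, ha⟩ ⟨b, hb⟩
        simp only [pow_zero, pow_one] at ha hb
        simp [ha, hb]
      simpa using (Nat.card_le_one_iff_subsingleton _).mpr hs
    | succ k ih =>
      set S : ℕ → Subgroup H := fun j => (powMonoidHom (p ^ j) : H →* H).ker with hS
      have hcardS : ∀ j, Nat.card (S j) = Nat.card {x : H // x ^ (p ^ j) = 1} := by
        intro j
        refine Nat.card_congr (Equiv.subtypeEquivRight ?_)
        intro x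
        simp [hS, MonoidHom.mem_ker, powMonoidHom_apply]
      -- the p-th power map from S (k+1) to S k
      have hmem : ∀ x : S (k + 1), ((x : H) ^ p) ∈ S k := by
        rintro ⟨x, hx⟩
        simp only [hS, MonoidHom.mem_ker, powMonoidHom_apply] at hx ⊢
        rw [← pow_mul, ← pow_succ']
        exact hx
      set ψ : S (k + 1) →* S k :=
        MonoidHom.codRestrict ((powMonoidHom p).domRestrict (S (k + 1))) (S k)
          (fun x => hmem x) with hψ
      have hcard1 : Nat.card (S (k + 1)) = Nat.card (S (k+1) ⧸ ψ.ker) * Nat.card ψ.ker :=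
        Subgroup.card_eq_card_quotient_mul_card_subgroup ψ.ker
      have hc2 : Nat.card (S (k+1) ⧸ ψ.ker) = Nat.card ψ.range :=
        Nat.card_congr (QuotientGroup.quotientKerEquivRange ψ).toEquiv
      have hrange : Nat.card ψ.range ≤ p ^ k := by
        calc Nat.card ψ.range ≤ Nat.card (S k) := Nat.card_le_card_of_injective _ Subtype.coe_injective
          _ ≤ p ^ k := by rw [hcardS k]; exact ih
      have hker : Nat.card ψ.ker ≤ p := by
        refine le_trans (Nat.card_le_card_of_injective
          (fun x : ψ.ker => (⟨((x : S (k+1)) : H), ?_⟩ : {x : H // x ^ p = 1})) ?_) h1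
        · have := x.2
          simp only [hψ, MonoidHom.mem_ker] at this
          have := congrArg (Subtype.val) this
          simpa [MonoidHom.codRestrict, MonoidHom.restrict, powMonoidHom_apply] using this
        · intro a b hab
          ext
          simpa using hab
      calc Nat.card {x : H // x ^ (p ^ (k+1)) = 1} = Nat.card (S (k+1)) := (hcardS (k+1)).symm
        _ = Nat.card (S (k+1) ⧸ ψ.ker) * Nat.card ψ.ker := hcard1
        _ ≤ p ^ k * p := by
            rw [hc2]
            exact Nat.mul_le_mul hrange hker
        _ = p ^ (k + 1) := (pow_succ p k).symm
  refine isCyclic_of_card_pow_eq_one_le ?_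
  intro n hn
  set k := n.factorization p with hk
  have hsub : ∀ a : H, a ^ n = 1 → a ^ (p ^ k) = 1 := by
    intro a ha
    obtain ⟨j, hj⟩ := (IsPGroup.iff_orderOf.mp hH) a
    have hdvd : p ^ j ∣ n := hj ▸ orderOf_dvd_of_pow_eq_one ha
    have hjk : j ≤ k := (Nat.Prime.pow_dvd_iff_le_factorization hp hn.ne').mp hdvd
    exact orderOf_dvd_iff_pow_eq_one.mp (hj ▸ pow_dvd_pow p hjk)
  have hinj : Nat.card {a : H // a ^ n = 1} ≤ Nat.card {x : H // x ^ (p ^ k) = 1} := by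
    refine Nat.card_le_card_of_injective (fun a => ⟨a.1, hsub a.1 a.2⟩) ?_
    intro a b hab
    ext
    simpa using hab
  rw [← Fintype.card_subtype, ← Nat.card_eq_fintype_card]
  calc Nat.card {a : H // a ^ n = 1} ≤ Nat.card {x : H // x ^ (p ^ k) = 1} := hinj
    _ ≤ p ^ k := hA k
    _ ≤ n := Nat.le_of_dvd hn (Nat.ordProj_dvd n p)

private lemma auxHomCard {p : ℕ} [Fact p.Prime] {E W : Type*} [AddCommGroup E] [Finite E]
    [AddCommGroup W] [Finite W] [Module (ZMod p) E] [Module (ZMod p) W]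
    (hEn : Nontrivial E) (hcard : Nat.card (E →+ W) = Nat.card E) : Nat.card W ≤ p := by
  classical
  have hp := (Fact.out : p.Prime)
  haveI : Module.Finite (ZMod p) E := Module.Finite.of_finite
  haveI : Module.Finite (ZMod p) W := Module.Finite.of_finite
  haveI : Module.Free (ZMod p) E := Module.Free.of_divisionRing _ _
  haveI : Module.Free (ZMod p) W := Module.Free.of_divisionRing _ _
  have := Fintype.ofFinite E
  have := Fintype.ofFinite W
  have e2 : (E →+ W) ≃ (E →ₗ[ZMod p] W) :=
    { toFun := fun f =>
        { toFun := f, map_add' := f.map_add,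
          map_smul' := fun c x => ZMod.map_smul f c x }
      invFun := fun f => f.toAddMonoidHom
      left_inv := fun f => rfl
      right_inv := fun f => rfl }
  haveI : Finite (E →+ W) := by
    have hinj : Function.Injective (fun (f : E →+ W) => (f : E → W)) := DFunLike.coe_injective
    exact Finite.of_injective _ hinj
  haveI : Finite (E →ₗ[ZMod p] W) := Finite.of_equiv _ e2
  have := Fintype.ofFinite (E →ₗ[ZMod p] W)
  set dE := Module.finrank (ZMod p) E with hdE
  set dW := Module.finrank (ZMod p) W with hdW
  have cardE : Nat.card E = p ^ dE := by
    rw [Nat.card_eq_fintype_card, Module.card_eq_pow_finrank (K := ZMod p), ZMod.card]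
  have cardW : Nat.card W = p ^ dW := by
    rw [Nat.card_eq_fintype_card, Module.card_eq_pow_finrank (K := ZMod p), ZMod.card]
  have cardHom : Nat.card (E →+ W) = p ^ (dE * dW) := by
    rw [Nat.card_congr e2, Nat.card_eq_fintype_card, Module.card_eq_pow_finrank (K := ZMod p),
      ZMod.card, Module.finrank_linearMap]
  have heq : dE * dW = dE := by
    have := cardHom.symm.trans (hcard.trans cardE)
    exact Nat.pow_right_injective hp.two_le this
  have hde : dE ≠ 0 := by
    intro h0
    have h1 : Nat.card E = 1 := by rw [cardE, h0, pow_zero]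
    exact ((Finite.one_lt_card_iff_nontrivial (α := E)).mpr hEn).ne' h1
  have hdw : dW = 1 :=
    Nat.eq_of_mul_eq_mul_left (Nat.pos_of_ne_zero hde) (heq.trans (mul_one dE).symm)
  rw [cardW, hdw, pow_one]

private lemma auxCount {p : ℕ} [Fact p.Prime] {Q N : Type*} [CommGroup Q] [Finite Q] [Nontrivial Q]
    (hQ : IsPGroup p Q) [CommGroup N] [Finite N]
    (e : Q ≃* (Q →* N)) : Nat.card {x : N // x ^ p = 1} ≤ p := by
  classical
  have hp := (Fact.out : p.Prime)
  set φ : Q →* Q := powMonoidHom p with hφ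
  set R : Subgroup Q := φ.range with hR
  set W : Subgroup N := (powMonoidHom p : N →* N).ker with hWdef
  have hW1 : ∀ w : W, (w : N) ^ p = 1 := by
    intro w
    have h2 := MonoidHom.mem_ker.mp w.2
    rwa [powMonoidHom_apply] at h2
  have hWmem : ∀ x : N, x ^ p = 1 → x ∈ W := by
    intro x hx
    rw [hWdef, MonoidHom.mem_ker, powMonoidHom_apply]
    exact hx
  -- cardinality of the p-torsion of Q
  have hAK : Nat.card {x : Q // x ^ p = 1} = Nat.card φ.ker := by
    refine Nat.card_congr (Equiv.subtypeEquivRight ?_).symm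
    intro x
    simp [MonoidHom.mem_ker, hφ, powMonoidHom_apply]
  have h1 : Nat.card Q = Nat.card (Q ⧸ R) * Nat.card R :=
    Subgroup.card_eq_card_quotient_mul_card_subgroup R
  have h2 : Nat.card Q = Nat.card (Q ⧸ φ.ker) * Nat.card φ.ker :=
    Subgroup.card_eq_card_quotient_mul_card_subgroup φ.ker
  have h3 : Nat.card (Q ⧸ φ.ker) = Nat.card R :=
    Nat.card_congr (QuotientGroup.quotientKerEquivRange φ).toEquiv
  have hRpos : 0 < Nat.card R := Nat.card_pos
  have hE : Nat.card (Q ⧸ R) = Nat.card φ.ker := by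
    have heq : Nat.card (Q ⧸ R) * Nat.card R = Nat.card φ.ker * Nat.card R := by
      rw [← h1, h2, h3, mul_comm]
    exact Nat.eq_of_mul_eq_mul_right hRpos heq
  -- torsion transported along e
  have hT : Nat.card {x : Q // x ^ p = 1} = Nat.card {f : Q →* N // f ^ p = 1} := by
    refine Nat.card_congr (e.toEquiv.subtypeEquiv ?_)
    intro q
    show q ^ p = 1 ↔ e q ^ p = 1
    constructor
    · intro hq
      rw [← map_pow, hq, map_one]
    · intro hq
      exact e.injective (by rw [map_pow, hq, map_one])
  have hpt : ∀ (f : Q →* N), f ^ p = 1 → ∀ q : Q, (f q) ^ p = 1 := by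
    intro f hf q
    have := congrFun (congrArg (fun g : Q →* N => (g : Q → N)) hf) q
    simpa using this
  have hB : Nat.card {f : Q →* N // f ^ p = 1} = Nat.card ((Q ⧸ R) →* W) := by
    refine Nat.card_congr ?_
    refine
      { toFun := fun f => QuotientGroup.lift R
          ((f : Q →* N).codRestrict W (fun q => hWmem _ (hpt f.1 f.2 q))) ?_
        invFun := fun g => ⟨W.subtype.comp (g.comp (QuotientGroup.mk' R)), ?_⟩
        left_inv := ?_
        right_inv := ?_ }
    · intro r hr
      obtain ⟨q, hq⟩ := hr
      ext
      simp only [MonoidHom.codRestrict_apply]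
      rw [← hq]
      simp only [hφ, powMonoidHom_apply, map_pow]
      exact hpt f.1 f.2 q
    · ext q
      simp only [MonoidHom.pow_apply, MonoidHom.comp_apply, MonoidHom.one_apply,
        Subgroup.coe_subtype]
      exact hW1 _
    · intro f
      ext q
      simp
    · intro g
      refine MonoidHom.ext fun q => ?_
      refine QuotientGroup.induction_on q (fun x => ?_)
      ext
      simp
  -- Q ⧸ R is nontrivial
  have hAnt : Nontrivial {x : Q // x ^ p = 1} := by
    obtain ⟨k, hk⟩ := IsPGroup.iff_card.mp hQ
    have hk0 : k ≠ 0 := by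
      rintro rfl
      have hlt := Finite.one_lt_card_iff_nontrivial.mpr (inferInstance : Nontrivial Q)
      rw [hk, pow_zero] at hlt
      omega
    obtain ⟨q0, hq0⟩ := exists_prime_orderOf_dvd_card' p (hk ▸ dvd_pow_self p hk0)
    refine ⟨⟨1, one_pow p⟩, ⟨q0, by rw [← hq0]; exact pow_orderOf_eq_one q0⟩, ?_⟩
    intro hcon
    have : (1 : Q) = q0 := congrArg Subtype.val hcon
    exact hp.one_lt.ne' (by rw [← hq0, ← this, orderOf_one])
  haveI hEnt : Nontrivial (Q ⧸ R) := by
    rw [← Finite.one_lt_card_iff_nontrivial, hE, ← hAK]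
    exact Finite.one_lt_card_iff_nontrivial.mpr hAnt
  -- exponent p for Q ⧸ R
  have hexpE : ∀ x : Q ⧸ R, x ^ p = 1 := by
    intro x
    refine QuotientGroup.induction_on x (fun q => ?_)
    rw [← QuotientGroup.mk'_apply, ← map_pow, QuotientGroup.mk'_apply,
      QuotientGroup.eq_one_iff]
    exact ⟨q, rfl⟩
  -- ZMod p module structures
  letI : Module (ZMod p) (Additive (Q ⧸ R)) :=
    AddCommGroup.zmodModule (by
      intro x
      exact congrArg Additive.ofMul (hexpE x.toMul))
  have hW1' : ∀ w : W, w ^ p = 1 := by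
    intro w
    ext
    rw [SubmonoidClass.coe_pow]
    exact hW1 w
  letI : Module (ZMod p) (Additive W) :=
    AddCommGroup.zmodModule (by
      intro x
      exact congrArg Additive.ofMul (hW1' x.toMul))
  haveI : Nontrivial (Additive (Q ⧸ R)) := hEnt
  have hcard : Nat.card (Additive (Q ⧸ R) →+ Additive W) = Nat.card (Additive (Q ⧸ R)) := by
    have : Nat.card (Additive (Q ⧸ R) →+ Additive W) = Nat.card ((Q ⧸ R) →* W) :=
      Nat.card_congr MonoidHom.toAdditive.symm
    rw [this, ← hB, ← hT, hAK, ← hE]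
    rfl
  have hfin := auxHomCard (p := p) (E := Additive (Q ⧸ R)) (W := Additive W)
    (inferInstance) hcard
  have : Nat.card {x : N // x ^ p = 1} = Nat.card W := by
    refine Nat.card_congr (Equiv.subtypeEquivRight ?_).symm
    intro x
    constructor
    · intro hx
      exact hW1 ⟨x, hx⟩
    · intro hx
      exact hWmem x hx
  rw [this]
  exact hfin

open Subgroup
open scoped IsMulCommutative
open scoped commutatorElement

private def fgHom {G : Type*} [Group G] (M : Subgroup G) (hM : M ≤ Subgroup.center G) (g : G)
    (hg : ∀ x : G, x⁻¹ * (g * x * g⁻¹) ∈ M) : G →* ↥M where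
  toFun x := ⟨x⁻¹ * (g * x * g⁻¹), hg x⟩
  map_one' := by
    ext
    simp
  map_mul' x y := by
    ext
    show (x*y)⁻¹ * (g * (x*y) * g⁻¹) = (x⁻¹ * (g * x * g⁻¹)) * (y⁻¹ * (g * y * g⁻¹))
    have hc : y⁻¹ * (x⁻¹ * (g * x * g⁻¹)) = (x⁻¹ * (g * x * g⁻¹)) * y⁻¹ :=
      Subgroup.mem_center_iff.mp (hM (hg x)) y⁻¹
    calc (x*y)⁻¹ * (g * (x*y) * g⁻¹)
        = (y⁻¹ * (x⁻¹ * (g * x * g⁻¹))) * (g * y * g⁻¹) := by group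
      _ = ((x⁻¹ * (g * x * g⁻¹)) * y⁻¹) * (g * y * g⁻¹) := by rw [hc]
      _ = (x⁻¹ * (g * x * g⁻¹)) * (y⁻¹ * (g * y * g⁻¹)) := by group

private def thetaG {G : Type*} [Group G] (M : Subgroup G) [IsMulCommutative ↥M] (hM : M ≤ Subgroup.center G)
    (hinner : ∀ g x : G, x⁻¹ * (g * x * g⁻¹) ∈ M) :
    G →* ((G ⧸ Subgroup.center G) →* ↥M) where
  toFun g := QuotientGroup.lift (Subgroup.center G) (fgHom M hM g (hinner g)) (by
    intro z hz
    ext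
    show z⁻¹ * (g * z * g⁻¹) = 1
    have : g * z = z * g := Subgroup.mem_center_iff.mp hz g
    rw [this]
    group)
  map_one' := by
    refine MonoidHom.ext fun q => ?_
    refine QuotientGroup.induction_on q (fun x => ?_)
    ext
    show x⁻¹ * (1 * x * 1⁻¹) = 1
    group
  map_mul' g h := by
    refine MonoidHom.ext fun q => ?_
    refine QuotientGroup.induction_on q (fun x => ?_)
    ext
    show x⁻¹ * ((g*h) * x * (g*h)⁻¹) = (x⁻¹ * (g * x * g⁻¹)) * (x⁻¹ * (h * x * h⁻¹))
    have hc : g * (x⁻¹ * (h * x * h⁻¹)) = (x⁻¹ * (h * x * h⁻¹)) * g :=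
      Subgroup.mem_center_iff.mp (hM (hinner h x)) g
    calc x⁻¹ * ((g*h) * x * (g*h)⁻¹)
        = (x⁻¹ * (g * x * g⁻¹)) * (g * (x⁻¹ * (h * x * h⁻¹)) * g⁻¹) := by group
      _ = (x⁻¹ * (g * x * g⁻¹)) * (((x⁻¹ * (h * x * h⁻¹)) * g) * g⁻¹) := by rw [hc]
      _ = (x⁻¹ * (g * x * g⁻¹)) * (x⁻¹ * (h * x * h⁻¹)) := by group



/-- If G is a non-abelian finite p-group, M ≤ Z(G), and Aut^M_{Z(G)}(G) = Inn(G),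
then G has nilpotency class 2, γ₂(G) ≤ M, and M is cyclic. -/
theorem stmt6 {p : ℕ} [Fact p.Prime] {G : Type*} [Group G] [Finite G]
    (hp : IsPGroup p G) (hna : ¬ ∀ a b : G, a * b = b * a)
    (M : Subgroup G) (hM : M ≤ Subgroup.center G)
    (h : {α : MulAut G | (∀ x : G, x⁻¹ * α x ∈ M) ∧ ∀ z ∈ Subgroup.center G, α z = z}
        = Set.range (fun g : G => MulAut.conj g)) :
    commutator G ≤ Subgroup.center G ∧ commutator G ≤ M ∧ IsCyclic ↥M := by
  classical
  have hinner : ∀ g x : G, x⁻¹ * (g * x * g⁻¹) ∈ M := by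
    intro g x
    have hmem : MulAut.conj g ∈ {α : MulAut G |
        (∀ x : G, x⁻¹ * α x ∈ M) ∧ ∀ z ∈ Subgroup.center G, α z = z} := by
      rw [h]
      exact ⟨g, rfl⟩
    simpa [MulAut.conj_apply] using hmem.1 x
  have hcM : commutator G ≤ M := by
    rw [commutator_def, Subgroup.commutator_le]
    intro g _ k _
    have hx := hinner k g⁻¹
    simpa [commutatorElement_def, mul_assoc] using hx
  refine ⟨hcM.trans hM, hcM, ?_⟩
  haveI : IsMulCommutative ↥M :=
    ⟨⟨fun a b => Subtype.ext (Subgroup.mem_center_iff.mp (hM b.2) a)⟩⟩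
  letI instCG : CommGroup (G ⧸ Subgroup.center G) :=
    { (inferInstance : Group (G ⧸ Subgroup.center G)) with
      mul_comm := by
        intro a b
        refine QuotientGroup.induction_on a fun x => QuotientGroup.induction_on b fun y => ?_
        have hcomm : ⁅y⁻¹, x⁻¹⁆ ∈ Subgroup.center G :=
          (hcM.trans hM) (by
            rw [_root_.commutator_def]
            exact Subgroup.commutator_mem_commutator (Subgroup.mem_top _) (Subgroup.mem_top _))
        have hmemc : (x * y)⁻¹ * (y * x) ∈ Subgroup.center G := by
          simpa [commutatorElement_def, mul_assoc] using hcomm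
        show ((x * y : G) : G ⧸ Subgroup.center G) = ((y * x : G) : G ⧸ Subgroup.center G)
        exact QuotientGroup.eq.mpr hmemc }
  haveI hQnt : Nontrivial (G ⧸ Subgroup.center G) := by
    by_contra hc
    rw [not_nontrivial_iff_subsingleton] at hc
    apply hna
    intro a b
    have hca : a ∈ Subgroup.center G := by
      rw [← QuotientGroup.eq_one_iff a]
      exact Subsingleton.elim _ _
    exact (Subgroup.mem_center_iff.mp hca b).symm
  have hθker : ∀ z ∈ Subgroup.center G, thetaG M hM hinner z = 1 := by
    intro z hz
    refine MonoidHom.ext fun q => QuotientGroup.induction_on q fun x => ?_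
    ext
    show x⁻¹ * (z * x * z⁻¹) = 1
    have hzx : z * x = x * z := (Subgroup.mem_center_iff.mp hz x).symm
    rw [hzx]
    group
  set Θ : (G ⧸ Subgroup.center G) →* ((G ⧸ Subgroup.center G) →* ↥M) :=
    QuotientGroup.lift (Subgroup.center G) (thetaG M hM hinner) hθker with hΘ
  have hΘapp : ∀ g x : G, Θ ((g : G) : G ⧸ Subgroup.center G) ((x : G) : G ⧸ Subgroup.center G)
      = ⟨x⁻¹ * (g * x * g⁻¹), hinner g x⟩ := fun g x => rfl
  have hinj : Function.Injective Θ := by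
    rw [injective_iff_map_eq_one]
    intro q
    refine QuotientGroup.induction_on q fun g => ?_
    intro hg
    have hgc : g ∈ Subgroup.center G := by
      rw [Subgroup.mem_center_iff]
      intro y
      have h2 : (⟨y⁻¹ * (g * y * g⁻¹), hinner g y⟩ : ↥M) = 1 := by
        rw [← hΘapp g y, hg]
        rfl
      have h3 : y⁻¹ * (g * y * g⁻¹) = 1 := congrArg Subtype.val h2
      have h4 : g * y * g⁻¹ = y := by
        have := congrArg (fun t => y * t) h3
        simpa [mul_assoc] using this
      calc y * g = (g * y * g⁻¹) * g := by rw [h4]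
        _ = g * y := by group
    exact (QuotientGroup.eq_one_iff g).mpr hgc
  have hsurj : Function.Surjective Θ := by
    intro f
    set F : G →* ↥M := f.comp (QuotientGroup.mk' (Subgroup.center G)) with hF
    have hFc : ∀ x : G, ((F x : G)) ∈ Subgroup.center G := fun x => hM (F x).2
    have hFz : ∀ z ∈ Subgroup.center G, F z = 1 := by
      intro z hz
      have hz1 : (QuotientGroup.mk' (Subgroup.center G)) z = 1 :=
        (QuotientGroup.eq_one_iff z).mpr hz
      rw [hF, MonoidHom.comp_apply, hz1, map_one]
    let αm : G →* G :=
      { toFun := fun x => x * (F x : G)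
        map_one' := by simp
        map_mul' := fun x y => by
          show (x * y) * ((F (x * y) : G)) = (x * (F x : G)) * (y * (F y : G))
          rw [map_mul, Subgroup.coe_mul]
          have hc : y * (F x : G) = (F x : G) * y := Subgroup.mem_center_iff.mp (hFc x) y
          calc x * y * ((F x : G) * (F y : G))
              = x * (y * (F x : G)) * (F y : G) := by group
            _ = x * ((F x : G) * y) * (F y : G) := by rw [hc]
            _ = x * (F x : G) * (y * (F y : G)) := by group }
    have hαinj : Function.Injective αm := by
      rw [injective_iff_map_eq_one]
      intro x hx
      have hx' : x = ((F x : G))⁻¹ := eq_inv_of_mul_eq_one_left hx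
      have hxM : x ∈ M := by
        rw [hx']
        exact M.inv_mem (F x).2
      have hFx1 : F x = 1 := hFz x (hM hxM)
      have : x * ((F x : G)) = 1 := hx
      rw [hFx1] at this
      simpa using this
    have hαsurj : Function.Surjective αm := Finite.injective_iff_surjective.mp hαinj
    let α : MulAut G := MulEquiv.ofBijective αm ⟨hαinj, hαsurj⟩
    have hαmem : α ∈ {α : MulAut G |
        (∀ x : G, x⁻¹ * α x ∈ M) ∧ ∀ z ∈ Subgroup.center G, α z = z} := by
      constructor
      · intro x
        show x⁻¹ * (x * (F x : G)) ∈ M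
        rw [inv_mul_cancel_left]
        exact (F x).2
      · intro z hz
        show z * (F z : G) = z
        rw [hFz z hz]
        simp
    rw [h] at hαmem
    obtain ⟨g, hg⟩ := hαmem
    refine ⟨((g : G) : G ⧸ Subgroup.center G), ?_⟩
    refine MonoidHom.ext fun q => QuotientGroup.induction_on q fun x => ?_
    have happ : g * x * g⁻¹ = x * (F x : G) := by
      have hg' : MulAut.conj g = α := hg
      have h5 : MulAut.conj g x = α x := by rw [hg']
      rw [MulAut.conj_apply] at h5
      exact h5
    rw [hΘapp g x]
    have hfF : f ((x : G) : G ⧸ Subgroup.center G) = F x := rfl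
    rw [hfF]
    ext
    show x⁻¹ * (g * x * g⁻¹) = (F x : G)
    rw [happ, inv_mul_cancel_left]
  have eΘ : (G ⧸ Subgroup.center G) ≃* ((G ⧸ Subgroup.center G) →* ↥M) :=
    MulEquiv.ofBijective Θ ⟨hinj, hsurj⟩
  have hpQ : IsPGroup p (G ⧸ Subgroup.center G) := hp.to_quotient _
  have hcard := auxCount (p := p) hpQ eΘ
  exact auxCyclic (hp.to_subgroup M) hcard
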